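/- Fix a > 0 and H ∈ (0,1/2). The kernel K belongs to L¹(0,∞), i.e. ∫₀^∞ |K(t)| dt < ∞. -/

import Mathlib

open MeasureTheory Real Set intervalIntegral

set_option maxHeartbeats 1000000

lemma fou_cont_exp (b : ℝ) : Continuous fun s : ℝ => Real.exp (b * s) :=
  Real.continuous_exp.comp (continuous_const.mul continuous_id)

/-- The moving-average kernel of the fractional Ornstein–Uhlenbeck process. -/
noncomputable def fouKernel (a H : ℝ) (t : ℝ) : ℝ :=
  (1 / Real.Gamma (H + 1/2)) *
    (t ^ (H - 1/2) - a * ∫ s in (0:ℝ)..t, (t - s) ^ (H - 1/2) * Real.exp (-a * s))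

/-- `x * exp (-x) ≤ 1` for `x ≥ 0` (indeed for all `x`). -/
lemma fou_xexp (x : ℝ) : x * Real.exp (-x) ≤ 1 := by
  rw [Real.exp_neg, mul_inv_le_iff₀ (Real.exp_pos x), one_mul]
  linarith [Real.add_one_le_exp x]

lemma fou_expInt {a : ℝ} (ha : 0 < a) (t : ℝ) :
    ∫ s in (0:ℝ)..t, Real.exp (-a * s) = (1 - Real.exp (-a * t)) / a := by
  have hane : a ≠ 0 := ne_of_gt ha
  have h := intervalIntegral.integral_comp_mul_left (fun x => Real.exp x)
    (a := (0:ℝ)) (b := t) (c := -a) (by simpa using hane)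
  simp only [integral_exp, mul_zero, Real.exp_zero, smul_eq_mul, neg_mul] at h ⊢
  rw [h, eq_div_iff hane, inv_neg, neg_mul, neg_mul_eq_mul_neg, mul_assoc, mul_comm, mul_assoc,
    mul_inv_cancel₀ hane, mul_one]
  ring

lemma fou_ii_sub {β : ℝ} (hβ : -1 < β) (t : ℝ) :
    IntervalIntegrable (fun s => (t - s) ^ β) volume 0 t := by
  have h := ((intervalIntegral.intervalIntegrable_rpow' hβ (a := 0) (b := t)).comp_sub_left t).symm
  simpa using h

lemma fou_ii_ker {a β : ℝ} (hβ : -1 < β) (t : ℝ) :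
    IntervalIntegrable (fun s => (t - s) ^ β * Real.exp (-a * s)) volume 0 t :=
  (fou_ii_sub hβ t).mul_continuousOn
    ((Real.continuous_exp.comp (continuous_const.mul continuous_id)).continuousOn)

lemma fou_ii_G {a β : ℝ} (hβ : -1 < β) (c d : ℝ) :
    IntervalIntegrable (fun u => u ^ β * Real.exp (a * u)) volume c d :=
  (intervalIntegral.intervalIntegrable_rpow' hβ).mul_continuousOn
    ((Real.continuous_exp.comp (continuous_const.mul continuous_id)).continuousOn)

/-- Substitution `u = t - s` in the kernel integral. -/
lemma fou_subst (a β t : ℝ) :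
    ∫ s in (0:ℝ)..t, (t - s) ^ β * Real.exp (-a * s)
      = Real.exp (-a * t) * ∫ u in (0:ℝ)..t, u ^ β * Real.exp (a * u) := by
  have h1 : EqOn (fun s => (t - s) ^ β * Real.exp (-a * s))
      (fun s => (fun x => x ^ β * Real.exp (-(a * t) + a * x)) (t - s)) (Set.uIcc 0 t) := by
    intro s _
    simp only
    congr 1
    congr 1
    ring
  rw [intervalIntegral.integral_congr h1,
    intervalIntegral.integral_comp_sub_left (fun x => x ^ β * Real.exp (-(a * t) + a * x)) t]
  simp only [sub_self, sub_zero]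
  rw [← intervalIntegral.integral_const_mul]
  apply intervalIntegral.integral_congr
  intro x _
  simp only
  rw [Real.exp_add]
  ring

/-- `∫₀ᵗ (t-s)^β ds = t^(β+1)/(β+1)`. -/
lemma fou_int_rpow {β : ℝ} (hβ : -1 < β) (t : ℝ) :
    ∫ s in (0:ℝ)..t, (t - s) ^ β = t ^ (β + 1) / (β + 1) := by
  rw [intervalIntegral.integral_comp_sub_left (fun x => x ^ β) t]
  simp only [sub_self, sub_zero]
  rw [integral_rpow (Or.inl hβ), Real.zero_rpow (by linarith : β + 1 ≠ 0)]
  ring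

/-- The key elementary inequality `(t-s)^β - t^β ≤ (s/t)·(t-s)^β` for `0 ≤ s < t`, `-1 < β < 0`. -/
lemma fou_core {β t s : ℝ} (hβ1 : -1 < β) (hβ0 : β < 0) (ht : 0 < t) (hs0 : 0 ≤ s)
    (hlt : s < t) : (t - s) ^ β - t ^ β ≤ s / t * (t - s) ^ β := by
  have hu : 0 < t - s := by linarith
  have hub : (0:ℝ) ≤ (t - s) ^ β := Real.rpow_nonneg hu.le β
  have hr0 : 0 < (t - s) / t := div_pos hu ht
  have hr1 : (t - s) / t ≤ 1 := by rw [div_le_one ht]; linarith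
  have hrβ : 0 < ((t - s) / t) ^ β := Real.rpow_pos_of_pos hr0 β
  have htβ : t ^ β = (t - s) ^ β / ((t - s) / t) ^ β := by
    rw [← Real.div_rpow hu.le (le_of_lt hr0)]
    congr 1
    field_simp
  have hr01 : ((t - s) / t) ^ (β + 1) ≤ 1 := Real.rpow_le_one hr0.le hr1 (by linarith)
  rw [Real.rpow_add hr0, Real.rpow_one] at hr01
  have hst : s / t = 1 - (t - s) / t := by field_simp; ring
  have hdiv : (t - s) / t * (t - s) ^ β ≤ (t - s) ^ β / ((t - s) / t) ^ β := by
    rw [le_div_iff₀ hrβ]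
    nlinarith
  rw [htβ, hst]
  linarith

/-- The pointwise bound on the integrand of `J`. -/
lemma fou_pointwise {a β t s : ℝ} (ha : 0 < a) (hβ1 : -1 < β) (hβ0 : β < 0)
    (ht : 0 < t) (hs : s ∈ Set.Icc 0 t) :
    |((t - s) ^ β - t ^ β) * Real.exp (-a * s)| ≤
      2 ^ (-β) * t ^ (β - 1) * (s * Real.exp (-a * s))
        + Real.exp (-(a / 2) * t) * (t - s) ^ β := by
  obtain ⟨hs0, hst⟩ := hs
  have hexp : 0 < Real.exp (-a * s) := Real.exp_pos _
  have htβ1 : t ^ (β - 1) = t ^ β / t := by rw [Real.rpow_sub ht, Real.rpow_one]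
  have h2β : (1:ℝ) ≤ 2 ^ (-β) := Real.one_le_rpow one_le_two (by linarith)
  have htβnn : (0:ℝ) ≤ t ^ β := Real.rpow_nonneg ht.le β
  rcases eq_or_lt_of_le hst with rfl | hlt
  · -- s = t
    rw [sub_self, Real.zero_rpow (ne_of_lt hβ0), zero_sub, abs_mul, abs_neg,
      abs_of_nonneg htβnn, abs_of_pos hexp, mul_zero, add_zero]
    have h1 : 2 ^ (-β) * s ^ (β - 1) * s = 2 ^ (-β) * s ^ β := by
      rw [htβ1]
      field_simp
    have h2 : s ^ β * Real.exp (-a * s) ≤ 2 ^ (-β) * s ^ β * Real.exp (-a * s) :=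
      mul_le_mul_of_nonneg_right (by nlinarith) hexp.le
    calc s ^ β * Real.exp (-a * s) ≤ 2 ^ (-β) * s ^ β * Real.exp (-a * s) := h2
      _ = 2 ^ (-β) * s ^ (β - 1) * (s * Real.exp (-a * s)) := by rw [← h1]; ring
  · -- s < t
    have hu : 0 < t - s := by linarith
    have hub : (0:ℝ) ≤ (t - s) ^ β := Real.rpow_nonneg hu.le β
    have hge : t ^ β ≤ (t - s) ^ β :=
      Real.rpow_le_rpow_of_nonpos hu (by linarith) hβ0.le
    rw [abs_mul, abs_of_nonneg (by linarith : (0:ℝ) ≤ (t - s) ^ β - t ^ β), abs_of_pos hexp]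
    have hkey := fou_core hβ1 hβ0 ht hs0 hlt
    have hcore : ((t - s) ^ β - t ^ β) * Real.exp (-a * s)
        ≤ s / t * (t - s) ^ β * Real.exp (-a * s) := by
      nlinarith
    rcases le_or_gt s (t / 2) with hhalf | hhalf
    · -- s ≤ t/2 : use the first term
      have hts : (t - s) ^ β ≤ (t / 2) ^ β :=
        Real.rpow_le_rpow_of_nonpos (by linarith) (by linarith) hβ0.le
      have ht2 : (t / 2) ^ β = 2 ^ (-β) * t ^ β := by
        rw [Real.div_rpow ht.le (by norm_num : (0:ℝ) ≤ 2), Real.rpow_neg (by norm_num : (0:ℝ) ≤ 2)]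
        ring
      have h3 : s / t * (t - s) ^ β * Real.exp (-a * s)
          ≤ 2 ^ (-β) * t ^ (β - 1) * (s * Real.exp (-a * s)) := by
        rw [htβ1]
        have h4 : s / t * (t - s) ^ β ≤ s / t * (2 ^ (-β) * t ^ β) := by
          rw [← ht2]
          apply mul_le_mul_of_nonneg_left hts (by positivity)
        calc s / t * (t - s) ^ β * Real.exp (-a * s)
            ≤ s / t * (2 ^ (-β) * t ^ β) * Real.exp (-a * s) := by nlinarith
          _ = 2 ^ (-β) * (t ^ β / t) * (s * Real.exp (-a * s)) := by
              field_simp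
      have h5 : (0:ℝ) ≤ Real.exp (-(a / 2) * t) * (t - s) ^ β :=
        mul_nonneg (Real.exp_pos _).le hub
      linarith
    · -- t/2 < s : use the second term
      have hfrac : s / t ≤ 1 := by rw [div_le_one ht]; linarith
      have hexp2 : Real.exp (-a * s) ≤ Real.exp (-(a / 2) * t) := by
        apply Real.exp_le_exp.2
        nlinarith
      have h3 : s / t * (t - s) ^ β * Real.exp (-a * s)
          ≤ Real.exp (-(a / 2) * t) * (t - s) ^ β := by
        have hfr0 : 0 ≤ s / t := by positivity
        nlinarith [mul_le_mul_of_nonneg_left hexp2 hub,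
          mul_le_mul_of_nonneg_right (mul_le_mul_of_nonneg_right hfrac hub) hexp.le]
      have h6 : (0:ℝ) ≤ 2 ^ (-β) * t ^ (β - 1) * (s * Real.exp (-a * s)) := by positivity
      linarith

theorem fouKernel_memL1 (a H : ℝ) (ha : 0 < a) (hH : H ∈ Set.Ioo (0:ℝ) (1/2)) :
    IntegrableOn (fouKernel a H) (Set.Ioi 0) := by
  obtain ⟨hH0, hH1⟩ := hH
  have hane : a ≠ 0 := ne_of_gt ha
  set β : ℝ := H - 1/2 with hβdef
  have hβ0 : β < 0 := by rw [hβdef]; linarith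
  have hβ1 : -1 < β := by rw [hβdef]; linarith
  have hβp : 0 < β + 1 := by linarith
  set c : ℝ := 1 / Real.Gamma (H + 1/2) with hc
  set G : ℝ → ℝ := fun t => ∫ u in (0:ℝ)..t, u ^ β * Real.exp (a * u) with hG
  have hGcont : Continuous G :=
    intervalIntegral.continuous_primitive (fun c d => fou_ii_G hβ1 c d) 0
  set φ : ℝ → ℝ := fun t => c * (t ^ β - a * (Real.exp (-a * t) * G t)) with hφ
  have hKφ : EqOn (fouKernel a H) φ (Set.Ioi 0) := by
    intro t _
    simp only [fouKernel, hφ, hG, ← hβdef, ← hc]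
    rw [fou_subst a β t]
  -- basic facts about E t := ∫₀ᵗ (t-s)^β e^{-as} ds
  have hEeq : ∀ t : ℝ, Real.exp (-a * t) * G t
      = ∫ s in (0:ℝ)..t, (t - s) ^ β * Real.exp (-a * s) := fun t => (fou_subst a β t).symm
  have hEnn : ∀ t : ℝ, 0 ≤ t → 0 ≤ ∫ s in (0:ℝ)..t, (t - s) ^ β * Real.exp (-a * s) := by
    intro t ht
    apply intervalIntegral.integral_nonneg ht
    intro s hs
    exact mul_nonneg (Real.rpow_nonneg (by linarith [hs.2]) β) (Real.exp_pos _).le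
  have hEle : ∀ t : ℝ, 0 ≤ t →
      (∫ s in (0:ℝ)..t, (t - s) ^ β * Real.exp (-a * s)) ≤ t ^ (β + 1) / (β + 1) := by
    intro t ht
    rw [← fou_int_rpow hβ1 t]
    apply intervalIntegral.integral_mono_on ht (fou_ii_ker hβ1 t) (fou_ii_sub hβ1 t)
    intro s hs
    have h1 : Real.exp (-a * s) ≤ 1 := Real.exp_le_one_iff.2 (by nlinarith [hs.1])
    have h2 : (0:ℝ) ≤ (t - s) ^ β := Real.rpow_nonneg (by linarith [hs.2]) β
    nlinarith
  have hφmeas : ContinuousOn φ (Set.Ioi 0) := by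
    apply ContinuousOn.mul continuousOn_const
    apply ContinuousOn.sub
    · intro t ht
      exact (Real.continuousAt_rpow_const t β (Or.inl (ne_of_gt ht))).continuousWithinAt
    · exact (continuous_const.mul
        (((Real.continuous_exp.comp (continuous_const.mul continuous_id)).mul
          hGcont))).continuousOn
  have key : IntegrableOn φ (Set.Ioi 0) := by
    rw [← Set.Ioc_union_Ioi_eq_Ioi (zero_le_one : (0:ℝ) ≤ 1)]
    apply IntegrableOn.union
    · -- on (0, 1]
      have hdom : IntegrableOn (fun t => |c| * (1 + a / (β + 1)) * t ^ β) (Set.Ioc (0:ℝ) 1) :=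
        ((intervalIntegral.intervalIntegrable_rpow' hβ1 (a := 0) (b := 1)).1).const_mul _
      refine Integrable.mono' hdom
        ((hφmeas.mono Set.Ioc_subset_Ioi_self).aestronglyMeasurable measurableSet_Ioc) ?_
      refine (ae_restrict_iff' measurableSet_Ioc).2 (Filter.Eventually.of_forall fun t ht => ?_)
      obtain ⟨ht0, ht1⟩ := ht
      have hE := hEeq t
      have hEn : 0 ≤ Real.exp (-a * t) * G t := by rw [hE]; exact hEnn t ht0.le
      have htβ : (0:ℝ) ≤ t ^ β := Real.rpow_nonneg ht0.le β
      have hstep : t ^ (β + 1) ≤ t ^ β :=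
        Real.rpow_le_rpow_of_exponent_ge ht0 ht1 (by linarith)
      have hEl2 : Real.exp (-a * t) * G t ≤ t ^ β / (β + 1) := by
        rw [hE]
        calc (∫ s in (0:ℝ)..t, (t - s) ^ β * Real.exp (-a * s))
            ≤ t ^ (β + 1) / (β + 1) := hEle t ht0.le
          _ ≤ t ^ β / (β + 1) := by gcongr
      have haβ : (0:ℝ) ≤ a / (β + 1) := by positivity
      rw [hφ]
      simp only
      rw [norm_eq_abs, abs_mul]
      have hq : a * (Real.exp (-a * t) * G t) ≤ a / (β + 1) * t ^ β := by
        rw [div_mul_eq_mul_div, mul_div_assoc]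
        exact mul_le_mul_of_nonneg_left hEl2 ha.le
      have hq0 : 0 ≤ a * (Real.exp (-a * t) * G t) := mul_nonneg ha.le hEn
      have hqβ : 0 ≤ a / (β + 1) * t ^ β := mul_nonneg haβ htβ
      have habs : |t ^ β - a * (Real.exp (-a * t) * G t)| ≤ (1 + a / (β + 1)) * t ^ β := by
        rw [abs_le]
        constructor
        · nlinarith
        · nlinarith
      calc |c| * |t ^ β - a * (Real.exp (-a * t) * G t)|
          ≤ |c| * ((1 + a / (β + 1)) * t ^ β) :=
            mul_le_mul_of_nonneg_left habs (abs_nonneg c)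
        _ = |c| * (1 + a / (β + 1)) * t ^ β := by ring
    · -- on (1, ∞)
      set g : ℝ → ℝ := fun t => |c| * Real.exp (-a * t)
        + |c| * (2 ^ (-β) * 4 / a) * t ^ (β - 1)
        + |c| * 4 / (β + 1) * Real.exp (-(a / 4) * t) with hg
      have hgint : IntegrableOn g (Set.Ioi 1) := by
        apply Integrable.add
        · apply Integrable.add
          · exact (exp_neg_integrableOn_Ioi 1 ha).const_mul _
          · exact (integrableOn_Ioi_rpow_of_lt (by linarith : β - 1 < -1) one_pos).const_mul _
        · exact (exp_neg_integrableOn_Ioi 1 (by positivity : (0:ℝ) < a / 4)).const_mul _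
      refine Integrable.mono' hgint
        ((hφmeas.mono (t := Set.Ioi 1) (fun x hx => lt_trans one_pos hx)).aestronglyMeasurable
          measurableSet_Ioi) ?_
      refine (ae_restrict_iff' measurableSet_Ioi).2 (Filter.Eventually.of_forall fun t ht => ?_)
      have ht1 : 1 < t := ht
      have ht0 : 0 < t := lt_trans one_pos ht1
      set E := ∫ s in (0:ℝ)..t, (t - s) ^ β * Real.exp (-a * s) with hEdef
      set J := ∫ s in (0:ℝ)..t, ((t - s) ^ β - t ^ β) * Real.exp (-a * s) with hJdef
      have hE : Real.exp (-a * t) * G t = E := hEeq t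
      have hiiE := fou_ii_ker (a := a) hβ1 t
      have hii2 : IntervalIntegrable (fun s => t ^ β * Real.exp (-a * s)) volume 0 t :=
        Continuous.intervalIntegrable (continuous_const.mul (fou_cont_exp (-a))) 0 t
      have hJeq : J = E - t ^ β * ((1 - Real.exp (-a * t)) / a) := by
        have h0 : J = ∫ s in (0:ℝ)..t,
            ((t - s) ^ β * Real.exp (-a * s) - t ^ β * Real.exp (-a * s)) := by
          rw [hJdef]
          congr 1
          funext s
          ring
        rw [h0, intervalIntegral.integral_sub hiiE hii2,
          intervalIntegral.integral_const_mul, fou_expInt ha t, ← hEdef]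
      have hdecomp : t ^ β - a * E = t ^ β * Real.exp (-a * t) - a * J := by
        rw [hJeq]
        field_simp
        ring
      -- bound on |J|
      have hptw : ∀ s ∈ Set.Icc (0:ℝ) t,
          |((t - s) ^ β - t ^ β) * Real.exp (-a * s)| ≤
            2 ^ (-β) * t ^ (β - 1) * (s * Real.exp (-a * s))
              + Real.exp (-(a / 2) * t) * (t - s) ^ β :=
        fun s hs => fou_pointwise ha hβ1 hβ0 ht0 hs
      have hiiJ : IntervalIntegrable
          (fun s => ((t - s) ^ β - t ^ β) * Real.exp (-a * s)) volume 0 t := by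
        have h0 : (fun s => ((t - s) ^ β - t ^ β) * Real.exp (-a * s))
            = fun s => (t - s) ^ β * Real.exp (-a * s) - t ^ β * Real.exp (-a * s) := by
          funext s
          ring
        rw [h0]
        exact hiiE.sub hii2
      have hiiR1 : IntervalIntegrable
          (fun s => 2 ^ (-β) * t ^ (β - 1) * (s * Real.exp (-a * s))) volume 0 t :=
        Continuous.intervalIntegrable
          (continuous_const.mul (continuous_id.mul (fou_cont_exp (-a)))) 0 t
      have hiiR2 : IntervalIntegrable
          (fun s => Real.exp (-(a / 2) * t) * (t - s) ^ β) volume 0 t :=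
        (fou_ii_sub hβ1 t).const_mul _
      have hJ1 : |J| ≤ ∫ s in (0:ℝ)..t, |((t - s) ^ β - t ^ β) * Real.exp (-a * s)| := by
        rw [hJdef]
        exact intervalIntegral.abs_integral_le_integral_abs ht0.le
      have hJ2 : (∫ s in (0:ℝ)..t, |((t - s) ^ β - t ^ β) * Real.exp (-a * s)|)
          ≤ ∫ s in (0:ℝ)..t, (2 ^ (-β) * t ^ (β - 1) * (s * Real.exp (-a * s))
              + Real.exp (-(a / 2) * t) * (t - s) ^ β) :=
        intervalIntegral.integral_mono_on ht0.le hiiJ.abs (hiiR1.add hiiR2) hptw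
      have hsexp : (∫ s in (0:ℝ)..t, s * Real.exp (-a * s)) ≤ 4 / a ^ 2 := by
        have hps : ∀ s ∈ Set.Icc (0:ℝ) t,
            s * Real.exp (-a * s) ≤ 2 / a * Real.exp (-(a / 2) * s) := by
          intro s _
          have hx := fou_xexp (a / 2 * s)
          have he : Real.exp (-(a / 2 * s)) = Real.exp (-(a / 2) * s) := by
            congr 1
            ring
          rw [he] at hx
          have hsplit : Real.exp (-a * s)
              = Real.exp (-(a / 2) * s) * Real.exp (-(a / 2) * s) := by
            rw [← Real.exp_add]
            congr 1
            ring
          rw [hsplit]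
          have hep : (0:ℝ) < Real.exp (-(a / 2) * s) := Real.exp_pos _
          rw [div_mul_eq_mul_div, le_div_iff₀ ha]
          nlinarith [mul_le_mul_of_nonneg_right hx hep.le]
        calc (∫ s in (0:ℝ)..t, s * Real.exp (-a * s))
            ≤ ∫ s in (0:ℝ)..t, 2 / a * Real.exp (-(a / 2) * s) :=
              intervalIntegral.integral_mono_on ht0.le
                (Continuous.intervalIntegrable (continuous_id.mul (fou_cont_exp (-a))) 0 t)
                (Continuous.intervalIntegrable
                  (continuous_const.mul (fou_cont_exp (-(a / 2)))) 0 t) hps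
          _ = 2 / a * ((1 - Real.exp (-(a / 2) * t)) / (a / 2)) := by
              rw [intervalIntegral.integral_const_mul, fou_expInt (by positivity) t]
          _ ≤ 4 / a ^ 2 := by
              have he1 : (0:ℝ) < Real.exp (-(a / 2) * t) := Real.exp_pos _
              rw [div_mul_div_comm, div_le_div_iff₀ (by positivity) (by positivity)]
              nlinarith
      have hint2 : (∫ s in (0:ℝ)..t, (2 ^ (-β) * t ^ (β - 1) * (s * Real.exp (-a * s))
              + Real.exp (-(a / 2) * t) * (t - s) ^ β))
          = 2 ^ (-β) * t ^ (β - 1) * (∫ s in (0:ℝ)..t, s * Real.exp (-a * s))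
            + Real.exp (-(a / 2) * t) * (t ^ (β + 1) / (β + 1)) := by
        rw [intervalIntegral.integral_add hiiR1 hiiR2, intervalIntegral.integral_const_mul,
          intervalIntegral.integral_const_mul, fou_int_rpow hβ1 t]
      have h2b : (0:ℝ) ≤ 2 ^ (-β) * t ^ (β - 1) := by positivity
      have hJbound : |J| ≤ 2 ^ (-β) * t ^ (β - 1) * (4 / a ^ 2)
          + Real.exp (-(a / 2) * t) * (t ^ (β + 1) / (β + 1)) := by
        calc |J| ≤ _ := hJ1
          _ ≤ _ := hJ2
          _ = _ := hint2
          _ ≤ 2 ^ (-β) * t ^ (β - 1) * (4 / a ^ 2)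
              + Real.exp (-(a / 2) * t) * (t ^ (β + 1) / (β + 1)) := by gcongr
      -- auxiliary estimates for large t
      have htβ : t ^ β ≤ 1 := Real.rpow_le_one_of_one_le_of_nonpos ht1.le hβ0.le
      have htβnn : (0:ℝ) ≤ t ^ β := Real.rpow_nonneg ht0.le β
      have htβ1le : t ^ (β + 1) ≤ t := by
        have h0 := Real.rpow_le_rpow_of_exponent_le ht1.le (by linarith : β + 1 ≤ 1)
        rwa [Real.rpow_one] at h0
      have htexp : t * Real.exp (-(a / 4) * t) ≤ 4 / a := by
        have hx := fou_xexp (a / 4 * t)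
        have he : Real.exp (-(a / 4 * t)) = Real.exp (-(a / 4) * t) := by
          congr 1
          ring
        rw [he] at hx
        rw [le_div_iff₀ ha]
        nlinarith [Real.exp_pos (-(a / 4) * t)]
      have hsplit2 : Real.exp (-(a / 2) * t)
          = Real.exp (-(a / 4) * t) * Real.exp (-(a / 4) * t) := by
        rw [← Real.exp_add]
        congr 1
        ring
      have ha2 : a * (2 ^ (-β) * t ^ (β - 1) * (4 / a ^ 2))
          = 2 ^ (-β) * 4 / a * t ^ (β - 1) := by
        field_simp
      have ha3 : a * (Real.exp (-(a / 2) * t) * (t ^ (β + 1) / (β + 1)))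
          ≤ 4 / (β + 1) * Real.exp (-(a / 4) * t) := by
        have he4 : (0:ℝ) < Real.exp (-(a / 4) * t) := Real.exp_pos _
        have h5 : t ^ (β + 1) * Real.exp (-(a / 4) * t) ≤ 4 / a :=
          le_trans (mul_le_mul_of_nonneg_right htβ1le he4.le) htexp
        have h6 : t ^ (β + 1) * Real.exp (-(a / 4) * t) * a ≤ 4 := (le_div_iff₀ ha).1 h5
        have h7 : a * (Real.exp (-(a / 2) * t) * (t ^ (β + 1) / (β + 1)))
            = (t ^ (β + 1) * Real.exp (-(a / 4) * t) * a) * Real.exp (-(a / 4) * t) / (β + 1) := by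
          rw [hsplit2]
          ring
        rw [h7, div_le_iff₀ hβp]
        calc t ^ (β + 1) * Real.exp (-(a / 4) * t) * a * Real.exp (-(a / 4) * t)
            ≤ 4 * Real.exp (-(a / 4) * t) := mul_le_mul_of_nonneg_right h6 he4.le
          _ = 4 / (β + 1) * Real.exp (-(a / 4) * t) * (β + 1) := by
              field_simp
      -- conclude
      have hφt : φ t = c * (t ^ β * Real.exp (-a * t) - a * J) := by
        rw [hφ]
        simp only
        rw [hE, hdecomp]
      have h1 : |t ^ β * Real.exp (-a * t) - a * J|
          ≤ t ^ β * Real.exp (-a * t) + a * |J| := by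
        have h0 := abs_sub (t ^ β * Real.exp (-a * t)) (a * J)
        rw [abs_mul a J, abs_of_pos ha,
          abs_of_nonneg (by positivity : (0:ℝ) ≤ t ^ β * Real.exp (-a * t))] at h0
        exact h0
      have h8 := mul_le_mul_of_nonneg_left hJbound ha.le
      rw [mul_add, ha2] at h8
      have h9 : ‖φ t‖ ≤ |c| * (Real.exp (-a * t) + (2 ^ (-β) * 4 / a * t ^ (β - 1)
          + 4 / (β + 1) * Real.exp (-(a / 4) * t))) := by
        rw [hφt, norm_eq_abs, abs_mul]
        apply mul_le_mul_of_nonneg_left _ (abs_nonneg c)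
        have h10 : t ^ β * Real.exp (-a * t) ≤ Real.exp (-a * t) := by
          nlinarith [Real.exp_pos (-a * t)]
        linarith [ha3]
      calc ‖φ t‖ ≤ _ := h9
        _ = g t := by
            rw [hg]
            ring
  exact (key.congr_fun (fun t ht => (hKφ ht).symm) measurableSet_Ioi)
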